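/- Let (X,d) be a Ptolemaic semimetric space, (Y,ρ) a semimetric space, and f: X→Y a surjective η-quasisymmetric mapping. If for all t₁,t₂,t₃,t₄>0 the inequality t₁t₂t₃t₄ ≤ t₁t₂ + t₃t₄ implies η(t₁)η(t₂)η(t₃)η(t₄) ≤ η(t₁)η(t₂) + η(t₃)η(t₄), then (Y,ρ) is Ptolemaic. -/
import Mathlib


open Set Filter Topology

structure IsSemimetric {X : Type*} (d : X → X → ℝ) : Prop where
  nonneg : ∀ x y, 0 ≤ d x y
  eq_iff : ∀ x y, d x y = 0 ↔ x = y
  symm : ∀ x y, d x y = d y x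

/-- `η` is a homeomorphism of `[0,∞)` onto itself (increasing, `η 0 = 0`). -/
structure IsQSHomeo (η : ℝ → ℝ) : Prop where
  maps : ∀ t, 0 ≤ t → 0 ≤ η t
  zero : η 0 = 0
  strictMonoOn : StrictMonoOn η (Set.Ici 0)
  surjOn : ∀ s, 0 ≤ s → ∃ t, 0 ≤ t ∧ η t = s
  continuousOn : ContinuousOn η (Set.Ici 0)

/-- `f` is an `η`-quasisymmetric mapping between the semimetric spaces `(X,d)` and `(Y,ρ)`. -/
def IsQuasisymmetric {X Y : Type*} (d : X → X → ℝ) (ρ : Y → Y → ℝ)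
    (η : ℝ → ℝ) (f : X → Y) : Prop :=
  IsQSHomeo η ∧ ∀ (x a b : X) (t : ℝ), 0 < t →
    d x a ≤ t * d x b → ρ (f x) (f a) ≤ η t * ρ (f x) (f b)

structure IsTriangleFunction {X : Type*} (d : X → X → ℝ) (Φ : ℝ → ℝ → ℝ) : Prop where
  symm : ∀ u v, Φ u v = Φ v u
  mono : ∀ u u' v v', 0 ≤ u → u ≤ u' → 0 ≤ v → v ≤ v' → Φ u v ≤ Φ u' v'
  zero : Φ 0 0 = 0
  tri : ∀ x y z, d x y ≤ Φ (d x z) (d y z)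

def IsPtolemaic {X : Type*} (d : X → X → ℝ) : Prop :=
  ∀ x y z t : X, d x z * d t y ≤ d x y * d t z + d x t * d y z

def distSet {X : Type*} (d : X → X → ℝ) (A : Set X) : Set ℝ :=
  {r | ∃ x ∈ A, ∃ y ∈ A, r = d x y}

noncomputable def sdiam {X : Type*} (d : X → X → ℝ) (A : Set X) : ℝ :=
  sSup (distSet d A)

def spectrum' {X : Type*} (d : X → X → ℝ) : Set ℝ := {r | ∃ x y : X, r = d x y}

def IsWeakSimilarity {X Y : Type*} (d : X → X → ℝ) (ρ : Y → Y → ℝ)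
    (f : X → Y) (φ : ℝ → ℝ) : Prop :=
  Function.Bijective f ∧ StrictMonoOn φ (spectrum' d) ∧
    φ '' spectrum' d = spectrum' ρ ∧ ∀ x y, φ (d x y) = ρ (f x) (f y)

/-- The topology `τ_d` generated by a semimetric `d`. -/
def tauD {X : Type*} (d : X → X → ℝ) : TopologicalSpace X where
  IsOpen A := ∀ a ∈ A, ∃ r > 0, {x | d a x < r} ⊆ A
  isOpen_univ := fun _ _ => ⟨1, one_pos, fun _ _ => trivial⟩
  isOpen_inter := fun A B hA hB a ha => by
    obtain ⟨r1, hr1, h1⟩ := hA a ha.1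
    obtain ⟨r2, hr2, h2⟩ := hB a ha.2
    refine ⟨min r1 r2, lt_min hr1 hr2, fun x hx => ⟨h1 ?_, h2 ?_⟩⟩
    · have hx' : d a x < min r1 r2 := hx
      exact lt_of_lt_of_le hx' (min_le_left r1 r2)
    · have hx' : d a x < min r1 r2 := hx
      exact lt_of_lt_of_le hx' (min_le_right r1 r2)
  isOpen_sUnion := fun S hS a ha => by
    obtain ⟨A, hA, haA⟩ := ha
    obtain ⟨r, hr, h⟩ := hS A hA a haA
    exact ⟨r, hr, fun x hx => ⟨A, hA, h hx⟩⟩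

lemma qs_eta_pos {η : ℝ → ℝ} (hη : IsQSHomeo η) {t : ℝ} (ht : 0 < t) : 0 < η t := by
  have := hη.strictMonoOn (Set.self_mem_Ici) (Set.mem_Ici.mpr ht.le) ht
  rwa [hη.zero] at this

theorem stmt_9 {X Y : Type*} (d : X → X → ℝ) (ρ : Y → Y → ℝ) (η : ℝ → ℝ) (f : X → Y)
    (hd : IsSemimetric d) (hρ : IsSemimetric ρ)
    (hptol : IsPtolemaic d)
    (hsurj : Function.Surjective f)
    (hq : IsQuasisymmetric d ρ η f)
    (himp : ∀ t₁ t₂ t₃ t₄ : ℝ, 0 < t₁ → 0 < t₂ → 0 < t₃ → 0 < t₄ →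
      t₁ * t₂ * t₃ * t₄ ≤ t₁ * t₂ + t₃ * t₄ →
      η t₁ * η t₂ * η t₃ * η t₄ ≤ η t₁ * η t₂ + η t₃ * η t₄) :
    IsPtolemaic ρ := by

  intro x y z w
  obtain ⟨a, rfl⟩ := hsurj x
  obtain ⟨b, rfl⟩ := hsurj y
  obtain ⟨c, rfl⟩ := hsurj z
  obtain ⟨e, rfl⟩ := hsurj w
  by_cases hac : ρ (f a) (f c) = 0
  · rw [hac, zero_mul]
    have := mul_nonneg (hρ.nonneg (f a) (f b)) (hρ.nonneg (f e) (f c))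
    have := mul_nonneg (hρ.nonneg (f a) (f e)) (hρ.nonneg (f b) (f c))
    linarith
  by_cases heb : ρ (f e) (f b) = 0
  · rw [heb, mul_zero]
    have := mul_nonneg (hρ.nonneg (f a) (f b)) (hρ.nonneg (f e) (f c))
    have := mul_nonneg (hρ.nonneg (f a) (f e)) (hρ.nonneg (f b) (f c))
    linarith
  by_cases hab : d a b = 0
  · obtain rfl := (hd.eq_iff a b).mp hab
    rw [(hρ.eq_iff (f a) (f a)).mpr rfl, zero_mul, zero_add, hρ.symm (f e) (f a), mul_comm]
  by_cases hec : d e c = 0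
  · obtain rfl := (hd.eq_iff e c).mp hec
    rw [(hρ.eq_iff (f e) (f e)).mpr rfl, mul_zero, zero_add, hρ.symm (f e) (f b)]
  by_cases hae : d a e = 0
  · obtain rfl := (hd.eq_iff a e).mp hae
    rw [(hρ.eq_iff (f a) (f a)).mpr rfl, zero_mul, add_zero, mul_comm]
  by_cases hbc : d b c = 0
  · obtain rfl := (hd.eq_iff b c).mp hbc
    rw [(hρ.eq_iff (f b) (f b)).mpr rfl, mul_zero, add_zero]
  -- main case
  have hη := hq.1
  have hQ := hq.2
  have hab' : 0 < d a b := lt_of_le_of_ne (hd.nonneg a b) (Ne.symm hab)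
  have hec' : 0 < d e c := lt_of_le_of_ne (hd.nonneg e c) (Ne.symm hec)
  have hae' : 0 < d a e := lt_of_le_of_ne (hd.nonneg a e) (Ne.symm hae)
  have hbc' : 0 < d b c := lt_of_le_of_ne (hd.nonneg b c) (Ne.symm hbc)
  have hac' : 0 < d a c :=
    lt_of_le_of_ne (hd.nonneg a c) (Ne.symm fun h0 =>
      hac ((hρ.eq_iff (f a) (f c)).mpr (by rw [(hd.eq_iff a c).mp h0])))
  have heb' : 0 < d e b :=
    lt_of_le_of_ne (hd.nonneg e b) (Ne.symm fun h0 =>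
      heb ((hρ.eq_iff (f e) (f b)).mpr (by rw [(hd.eq_iff e b).mp h0])))
  set t1 := d a c / d a b with ht1def
  set t2 := d e b / d e c with ht2def
  set t3 := d a c / d a e with ht3def
  set t4 := d e b / d b c with ht4def
  have ht1 : 0 < t1 := div_pos hac' hab'
  have ht2 : 0 < t2 := div_pos heb' hec'
  have ht3 : 0 < t3 := div_pos hac' hae'
  have ht4 : 0 < t4 := div_pos heb' hbc'
  have hpt := hptol a b c e
  have key : t1 * t2 * t3 * t4 ≤ t1 * t2 + t3 * t4 := by
    rw [ht1def, ht2def, ht3def, ht4def, div_mul_div_comm, div_mul_div_comm, div_mul_div_comm, div_mul_div_comm,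
      div_add_div _ _ (by positivity) (by positivity), div_le_div_iff₀ (by positivity) (by positivity)]
    nlinarith [mul_le_mul_of_nonneg_left hpt
      (by positivity : (0:ℝ) ≤ d a c * d e b * (d a b * d e c * (d a e * d b c)))]
  have keyη := himp t1 t2 t3 t4 ht1 ht2 ht3 ht4 key
  have hη1 := qs_eta_pos hη ht1
  have hη2 := qs_eta_pos hη ht2
  have hη3 := qs_eta_pos hη ht3
  have hη4 := qs_eta_pos hη ht4
  have h1 : ρ (f a) (f c) ≤ η t1 * ρ (f a) (f b) :=
    hQ a c b t1 ht1 (le_of_eq (div_mul_cancel₀ _ hab'.ne').symm)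
  have h2 : ρ (f e) (f b) ≤ η t2 * ρ (f e) (f c) :=
    hQ e b c t2 ht2 (le_of_eq (div_mul_cancel₀ _ hec'.ne').symm)
  have h3 : ρ (f a) (f c) ≤ η t3 * ρ (f a) (f e) :=
    hQ a c e t3 ht3 (le_of_eq (div_mul_cancel₀ _ hae'.ne').symm)
  have h4 : ρ (f b) (f e) ≤ η t4 * ρ (f b) (f c) := by
    refine hQ b e c t4 ht4 ?_
    rw [hd.symm b e]
    exact le_of_eq (div_mul_cancel₀ _ hbc'.ne').symm
  have h4' : ρ (f e) (f b) ≤ η t4 * ρ (f b) (f c) := by rwa [hρ.symm (f e) (f b)]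
  set L := ρ (f a) (f c) * ρ (f e) (f b) with hLdef
  set A := ρ (f a) (f b) * ρ (f e) (f c) with hAdef
  set B := ρ (f a) (f e) * ρ (f b) (f c) with hBdef
  have hL : 0 < L := mul_pos
    (lt_of_le_of_ne (hρ.nonneg (f a) (f c)) (Ne.symm hac))
    (lt_of_le_of_ne (hρ.nonneg (f e) (f b)) (Ne.symm heb))
  have hLA : L ≤ (η t1 * η t2) * A := by
    calc L ≤ (η t1 * ρ (f a) (f b)) * (η t2 * ρ (f e) (f c)) :=
          mul_le_mul h1 h2 (hρ.nonneg (f e) (f b)) (mul_nonneg hη1.le (hρ.nonneg (f a) (f b)))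
      _ = (η t1 * η t2) * A := by rw [hAdef]; ring
  have hLB : L ≤ (η t3 * η t4) * B := by
    calc L ≤ (η t3 * ρ (f a) (f e)) * (η t4 * ρ (f b) (f c)) :=
          mul_le_mul h3 h4' (hρ.nonneg (f e) (f b)) (mul_nonneg hη3.le (hρ.nonneg (f a) (f e)))
      _ = (η t3 * η t4) * B := by rw [hBdef]; ring
  have hP : 0 < η t1 * η t2 := mul_pos hη1 hη2
  have hQ' : 0 < η t3 * η t4 := mul_pos hη3 hη4
  nlinarith [mul_le_mul_of_nonneg_left hLA hQ'.le, mul_le_mul_of_nonneg_left hLB hP.le,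
    mul_pos hP hQ', mul_le_mul_of_nonneg_right keyη hL.le]
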